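/- Let λ > 0 and z ∈ ℝ^J with ‖z‖₁ ≤ λ. Then the zero vector is a minimizer (indeed the unique minimizer) of the function v ↦ λ‖v‖_∞ + (1/2)‖v − z‖₂² on ℝ^J. -/

import Mathlib

/-- Proximal problem of the sup-norm regularizer, first branch of Algorithm 2: if
`λ > 0` and `‖z‖₁ ≤ λ`, then `0` is the (unique) minimizer of
`v ↦ λ‖v‖_∞ + (1/2)‖v − z‖₂²` on `ℝ^J`. -/
theorem stmt_3 (J : ℕ) (lam : ℝ) (hlam : 0 < lam) (z : Fin J → ℝ)
    (hz : ∑ i, |z i| ≤ lam) :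
    let f : (Fin J → ℝ) → ℝ :=
      fun v => lam * (⨆ i, |v i|) + (1 / 2) * ∑ i, (v i - z i) ^ 2
    (∀ v, f 0 ≤ f v) ∧ (∀ v, (∀ u, f v ≤ f u) → v = 0) := by
  intro f
  have hsup0 : (⨆ i : Fin J, |(0 : ℝ)|) = 0 := by
    apply le_antisymm
    · exact Real.iSup_le (fun i => by simp) le_rfl
    · exact Real.iSup_nonneg (fun i => abs_nonneg _)
  have hf0 : f 0 = (1 / 2) * ∑ i, z i ^ 2 := by
    simp only [f, Pi.zero_apply, hsup0, mul_zero, zero_add, zero_sub, neg_sq]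
  have key : ∀ v : Fin J → ℝ, f 0 + (1 / 2) * ∑ i, v i ^ 2 ≤ f v := by
    intro v
    set M := ⨆ i, |v i| with hM
    have hMnn : 0 ≤ M := Real.iSup_nonneg fun i => abs_nonneg _
    have hle : ∀ i, |v i| ≤ M := fun i =>
      le_ciSup (Set.Finite.bddAbove (Set.finite_range fun i => |v i|)) i
    have hdot : ∑ i, v i * z i ≤ lam * M := by
      calc ∑ i, v i * z i ≤ ∑ i, M * |z i| := by
            apply Finset.sum_le_sum
            intro i _
            calc v i * z i ≤ |v i * z i| := le_abs_self _
              _ = |v i| * |z i| := abs_mul _ _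
              _ ≤ M * |z i| := by
                  exact mul_le_mul_of_nonneg_right (hle i) (abs_nonneg _)
        _ = M * ∑ i, |z i| := by rw [Finset.mul_sum]
        _ ≤ M * lam := mul_le_mul_of_nonneg_left hz hMnn
        _ = lam * M := mul_comm _ _
    have hexp : ∑ i, (v i - z i) ^ 2
        = ∑ i, v i ^ 2 - 2 * ∑ i, v i * z i + ∑ i, z i ^ 2 := by
      have h : ∀ i ∈ Finset.univ, (v i - z i) ^ 2 = v i ^ 2 - 2 * (v i * z i) + z i ^ 2 :=
        fun i _ => by ring
      rw [Finset.sum_congr rfl h, Finset.sum_add_distrib, Finset.sum_sub_distrib,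
        Finset.mul_sum]
    have : f v = lam * M + (1 / 2) * (∑ i, v i ^ 2 - 2 * ∑ i, v i * z i + ∑ i, z i ^ 2) := by
      simp only [f, hexp, hM]
    rw [this, hf0]
    linarith
  constructor
  · intro v
    have h2 : (0 : ℝ) ≤ ∑ i, v i ^ 2 :=
      Finset.sum_nonneg fun i _ => sq_nonneg _
    exact le_trans (le_add_of_nonneg_right (by positivity)) (key v)
  · intro v hv
    have h1 : f v ≤ f 0 := hv 0
    have h2 : (0 : ℝ) ≤ ∑ i, v i ^ 2 :=
      Finset.sum_nonneg fun i _ => sq_nonneg _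
    have hk := key v
    have h3 : f 0 + 1 / 2 * ∑ i, v i ^ 2 ≤ f 0 := hk.trans h1
    have h4 : 1 / 2 * ∑ i, v i ^ 2 ≤ 0 := (add_le_iff_nonpos_right _).mp h3
    have hsum : ∑ i, v i ^ 2 = 0 := le_antisymm (by linarith) h2
    funext i
    have := (Finset.sum_eq_zero_iff_of_nonneg (fun i _ => sq_nonneg (v i))).mp hsum i
      (Finset.mem_univ i)
    exact pow_eq_zero_iff (by norm_num) |>.mp this
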